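/- A cyclic discrete intermediate value theorem with even steps: let g : ℤ/Nℤ → 2ℤ take even integer values such that consecutive values differ by +2 or by -2q+2 (for some q ≥ 2), and suppose the average of g over some q equally spaced points is 0. Then g attains the value 0. -/
import Mathlib


/-- Cyclic discrete intermediate value theorem with even steps: a cyclic
even-integer-valued walk of length `N = q*d` with steps `+2` or `-2q+2`,
whose average over the `q` equally spaced points `j*d` is zero, attains
the value `0`. -/
theorem cyclic_discrete_ivt (N q d : ℕ) (hq : 2 ≤ q) (hN : 0 < N)
    (hd : N = q * d) (g : ℕ → ℤ) (heven : Even (g 0)) (hcyc : g N = g 0)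
    (hstep : ∀ i < N, g (i + 1) = g i + 2 ∨ g (i + 1) = g i - 2 * q + 2)
    (havg : ∑ j ∈ Finset.range q, g (j * d) = 0) :
    ∃ i < N, g i = 0 := by
  by_contra hcon
  push_neg at hcon
  -- all values up to N are nonzero
  have hnz : ∀ i ≤ N, g i ≠ 0 := by
    intro i hi
    rcases lt_or_eq_of_le hi with h | h
    · exact hcon i h
    · rw [h, hcyc]; exact hcon 0 hN
  -- all values up to N are even
  have hev : ∀ i ≤ N, Even (g i) := by
    intro i
    induction i with
    | zero => exact fun _ => heven
    | succ n ih =>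
      intro hn
      have hn' : n < N := hn
      obtain ⟨r, hr⟩ := ih hn'.le
      rcases hstep n hn' with h | h
      · exact ⟨r + 1, by rw [h, hr]; ring⟩
      · exact ⟨r - q + 1, by rw [h, hr]; ring⟩
  -- once negative, always negative
  have hneg : ∀ k ≤ N, ∀ i ≤ k, g i < 0 → g k < 0 := by
    intro k
    induction k with
    | zero =>
      intro _ i hi hgi
      interval_cases i
      exact hgi
    | succ n ih =>
      intro hn i hi hgi
      rcases eq_or_lt_of_le hi with h | h
      case inl => rw [← h]; exact hgi
      · have hgn : g n < 0 := ih (Nat.le_of_succ_le hn) i (Nat.lt_succ_iff.mp h) hgi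
        have hn' : n < N := hn
        have hnz' : g (n + 1) ≠ 0 := hnz (n + 1) hn
        obtain ⟨r, hr⟩ := hev n hn'.le
        have hq' : (2 : ℤ) ≤ (q : ℤ) := by exact_mod_cast hq
        rcases hstep n hn' with h' | h' <;> omega
  have hd1 : 1 ≤ d := by
    rcases Nat.eq_zero_or_pos d with h | h
    · rw [h, Nat.mul_zero] at hd; omega
    · exact h
  have hjd : ∀ j < q, j * d ≤ N := by
    intro j hj
    calc j * d ≤ q * d := Nat.mul_le_mul_right d hj.le
    _ = N := hd.symm
  have hne : (Finset.range q).Nonempty := ⟨0, Finset.mem_range.mpr (by omega)⟩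
  rcases lt_trichotomy (g 0) 0 with h0 | h0 | h0
  · -- everything negative, sum negative
    have hall : ∀ j ∈ Finset.range q, g (j * d) < 0 := by
      intro j hj
      exact hneg (j * d) (hjd j (Finset.mem_range.mp hj)) 0 (Nat.zero_le _) h0
    have := Finset.sum_neg hall hne
    omega
  · exact hnz 0 (Nat.zero_le _) h0
  · -- everything positive, sum positive
    have hall : ∀ j ∈ Finset.range q, 0 < g (j * d) := by
      intro j hj
      by_contra hle
      push_neg at hle
      have hlt : g (j * d) < 0 :=
        lt_of_le_of_ne hle (hnz (j * d) (hjd j (Finset.mem_range.mp hj)))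
      have : g N < 0 := hneg N le_rfl (j * d) (hjd j (Finset.mem_range.mp hj)) hlt
      rw [hcyc] at this; omega
    have := Finset.sum_pos hall hne
    omega
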